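/- Let 0 < a < b and let w be a point of the upper half-plane H², with |w| its Euclidean absolute value as a complex number. Then: d(w, aI) < d(w, bI) if and only if |w| < √(ab); d(w, aI) = d(w, bI) if and only if |w| = √(ab); and d(w, aI) > d(w, bI) if and only if |w| > √(ab). In particular, the equidistant line between aI and bI is the Euclidean semicircle |w| = √(ab), the square hyperbola S_k(aI,bI) lies above it when k > 0, and below it when k < 0. -/

import Mathlib

open UpperHalfPlane

noncomputable section

/-- The point of the upper half-plane with complex coordinate `a·i`, for `a > 0`. -/
def ptI (a : ℝ) (ha : 0 < a) : UpperHalfPlane := ⟨a * Complex.I, by simpa using ha⟩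

lemma cosh_dist_ptI (w : UpperHalfPlane) (c : ℝ) (hc : 0 < c) :
    Real.cosh (dist w (ptI c hc)) = (w.re ^ 2 + w.im ^ 2 + c ^ 2) / (2 * w.im * c) := by
  rw [UpperHalfPlane.cosh_dist']
  have h1 : (ptI c hc).re = 0 := by simp [ptI, UpperHalfPlane.re]
  have h2 : (ptI c hc).im = c := by simp [ptI, UpperHalfPlane.im]
  rw [h1, h2]
  ring_nf

lemma cosh_lt_cosh_nonneg {x y : ℝ} (hx : 0 ≤ x) (hy : 0 ≤ y) :
    Real.cosh x < Real.cosh y ↔ x < y := by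
  rw [Real.cosh_lt_cosh, abs_of_nonneg hx, abs_of_nonneg hy]

lemma dist_ptI_lt (w : UpperHalfPlane) (a b : ℝ) (ha : 0 < a) (hb : 0 < b) (hab : a < b) :
    dist w (ptI a ha) < dist w (ptI b hb) ↔
      w.re ^ 2 + w.im ^ 2 < a * b := by
  have him := w.im_pos
  rw [← cosh_lt_cosh_nonneg dist_nonneg dist_nonneg,
    cosh_dist_ptI, cosh_dist_ptI, div_lt_div_iff₀ (by positivity) (by positivity)]
  have hba : (0:ℝ) < 2 * w.im * (b - a) := by nlinarith
  have key : (w.re ^ 2 + w.im ^ 2 + a ^ 2) * (2 * w.im * b) -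
      (w.re ^ 2 + w.im ^ 2 + b ^ 2) * (2 * w.im * a) =
      2 * w.im * (b - a) * (w.re ^ 2 + w.im ^ 2 - a * b) := by ring
  constructor <;> intro h <;> nlinarith [key, hba]

/-- For `0 < a < b` and `w ∈ ℍ`: `d(w,aI) < d(w,bI)` iff `|w| < √(ab)`,
`d(w,aI) = d(w,bI)` iff `|w| = √(ab)`, and `d(w,aI) > d(w,bI)` iff `|w| > √(ab)`.
In particular the equidistant line between `aI` and `bI` is the Euclidean semicircle
`|w| = √(ab)`, and the square hyperbola `S_k(aI,bI)` lies above it when `k > 0`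
and below it when `k < 0`. -/
theorem dist_comparison_imaginary_points (a b : ℝ) (ha : 0 < a) (hab : a < b)
    (w : UpperHalfPlane) :
    (dist w (ptI a ha) < dist w (ptI b (ha.trans hab)) ↔
        ‖(w : ℂ)‖ < Real.sqrt (a * b)) ∧
    (dist w (ptI a ha) = dist w (ptI b (ha.trans hab)) ↔
        ‖(w : ℂ)‖ = Real.sqrt (a * b)) ∧
    (dist w (ptI b (ha.trans hab)) < dist w (ptI a ha) ↔
        Real.sqrt (a * b) < ‖(w : ℂ)‖) := by
  have hb := ha.trans hab
  have habs : ‖(w : ℂ)‖ ^ 2 = w.re ^ 2 + w.im ^ 2 := by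
    rw [Complex.sq_norm, Complex.normSq_apply]
    simp [UpperHalfPlane.coe_re, UpperHalfPlane.coe_im]; ring
  have h1 : dist w (ptI a ha) < dist w (ptI b hb) ↔
      ‖(w : ℂ)‖ < Real.sqrt (a * b) := by
    rw [dist_ptI_lt w a b ha hb hab, ← habs,
      show Real.sqrt (a * b) = Real.sqrt (a * b) from rfl]
    rw [← Real.sqrt_lt_sqrt_iff (by positivity), Real.sqrt_sq (by positivity)]
  have h3 : dist w (ptI b hb) < dist w (ptI a ha) ↔
      Real.sqrt (a * b) < ‖(w : ℂ)‖ := by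
    have him := w.im_pos
    rw [← cosh_lt_cosh_nonneg dist_nonneg dist_nonneg,
      cosh_dist_ptI, cosh_dist_ptI, div_lt_div_iff₀ (by positivity) (by positivity)]
    have : a * b < w.re ^ 2 + w.im ^ 2 ↔ Real.sqrt (a * b) < ‖(w : ℂ)‖ := by
      rw [← habs, ← Real.sqrt_lt_sqrt_iff (by positivity), Real.sqrt_sq (by positivity)]
    rw [← this]
    have hba : (0:ℝ) < 2 * w.im * (b - a) := by nlinarith
    have key : (w.re ^ 2 + w.im ^ 2 + a ^ 2) * (2 * w.im * b) -
        (w.re ^ 2 + w.im ^ 2 + b ^ 2) * (2 * w.im * a) =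
        2 * w.im * (b - a) * (w.re ^ 2 + w.im ^ 2 - a * b) := by ring
    constructor <;> intro h <;> nlinarith [key, hba]
  refine ⟨h1, ?_, h3⟩
  constructor
  · intro h
    by_contra hne
    rcases lt_or_gt_of_ne hne with hlt | hgt
    · exact absurd h (ne_of_lt (h1.2 hlt))
    · exact absurd h.symm (ne_of_lt (h3.2 hgt))
  · intro h
    by_contra hne
    rcases lt_or_gt_of_ne hne with hlt | hgt
    · exact absurd (h1.1 hlt) (by rw [h]; exact lt_irrefl _)
    · exact absurd (h3.1 hgt) (by rw [h]; exact lt_irrefl _)
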